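/- Let 𝒰 and 𝒱 be covers of a metric space X and suppose there is a constant D ≥ 1 such that for every V ∈ 𝒱 there is some U_V ∈ 𝒰 with V ⊆ N^D_D(U_V), where the iterated neighbourhoods of members of 𝒰 are taken with respect to 𝒰. Then for every m ≥ 0 and s ≥ 1 there exist m' ≥ 0 and s' ≥ 1 such that N^m_s(V) ⊆ N^{m'}_{s'}(U_V) for every V ∈ 𝒱, where N^m_s(V) is taken with respect to 𝒱 and N^{m'}_{s'}(U_V) with respect to 𝒰. -/

import Mathlib

open Metric Set

/-- A metric space is 1-uniformly discrete. -/
def UnifDiscrete (X : Type*) [MetricSpace X] : Prop :=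
  ∀ x y : X, x ≠ y → 1 ≤ dist x y

/-- Bounded geometry: balls of each radius have uniformly bounded cardinality. -/
def BddGeom (X : Type*) [MetricSpace X] : Prop :=
  ∀ R : ℝ, ∃ N : ℕ, ∀ (x : X) (s : Finset X), ↑s ⊆ Metric.closedBall x R → s.card ≤ N

/-- A regular map between metric spaces. -/
def IsRegularMap {X Y : Type*} [MetricSpace X] [MetricSpace Y] (f : X → Y) : Prop :=
  ∃ κ : ℕ, 1 ≤ κ ∧ (∀ x x' : X, dist (f x) (f x') ≤ κ * (1 + dist x x')) ∧
    ∀ y : Y, ∃ c : Finset X, c.card ≤ κ ∧ f ⁻¹' Metric.ball y 1 ⊆ ⋃ x ∈ c, Metric.ball x 1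

/-- A quasi-isometric embedding. -/
def IsQIEmbedding {X Y : Type*} [MetricSpace X] [MetricSpace Y] (f : X → Y) : Prop :=
  ∃ L D : ℝ, 1 ≤ L ∧ 0 ≤ D ∧ ∀ x x' : X,
    L⁻¹ * dist x x' - D ≤ dist (f x) (f x') ∧ dist (f x) (f x') ≤ L * dist x x' + D

/-- A coarse Lipschitz map. -/
def CoarseLipschitz {X Y : Type*} [MetricSpace X] [MetricSpace Y] (f : X → Y) : Prop :=
  ∃ K : ℝ, 1 ≤ K ∧ ∀ x x' : X, dist (f x) (f x') ≤ K * dist x x' + K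

/-- The metric of `T` is the graph metric of a 3-regular tree. -/
def IsCubicTreeMetric (T : Type*) [MetricSpace T] : Prop :=
  ∃ G : SimpleGraph T, G.Connected ∧ G.IsAcyclic ∧
    (∀ v : T, (G.neighborSet v).ncard = 3) ∧
    ∀ u v : T, dist u v = (G.dist u v : ℝ)

/-- The metric of `Z` is the graph metric of a connected graph of uniformly bounded degree. -/
def IsBddDegGraphMetric (Z : Type*) [MetricSpace Z] : Prop :=
  ∃ G : SimpleGraph Z, G.Connected ∧
    (∃ D : ℕ, ∀ v : Z, (G.neighborSet v).ncard ≤ D) ∧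
    ∀ u v : Z, dist u v = (G.dist u v : ℝ)

/-- A non-decreasing subexponential function `[0,∞) → [0,∞)`. -/
def SubexpFun (g : ℝ → ℝ) : Prop :=
  MonotoneOn g (Set.Ici 0) ∧ (∀ r : ℝ, 0 ≤ g r) ∧
    Filter.Tendsto (fun r => Real.log (g r) / r) Filter.atTop (nhds 0)

/-- Every ball of radius `r` in `Z` contains at most `g r` points. -/
def HasGrowthBound (Z : Type*) [MetricSpace Z] (g : ℝ → ℝ) : Prop :=
  ∀ (z : Z) (r : ℝ), 0 ≤ r → ∀ s : Finset Z, ↑s ⊆ Metric.closedBall z r → (s.card : ℝ) ≤ g r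

def HasSubexpGrowth (Z : Type*) [MetricSpace Z] : Prop :=
  ∃ g : ℝ → ℝ, SubexpFun g ∧ HasGrowthBound Z g

def HasPolyGrowth (Z : Type*) [MetricSpace Z] : Prop :=
  ∃ (C : ℝ) (d : ℕ), 1 ≤ C ∧ HasGrowthBound Z (fun r => C * r ^ d + C)

/-- Distinct members of the family are at distance at least `r` from each other. -/
def SepFamily {X : Type*} [MetricSpace X] (r : ℝ) (𝒰 : Set (Set X)) : Prop :=
  ∀ U ∈ 𝒰, ∀ V ∈ 𝒰, U ≠ V → ∀ x ∈ U, ∀ y ∈ V, r ≤ dist x y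

/-- A decomposition of `X` into `n+1` colours of `r`-separated pieces. -/
def Decomp {X : Type*} [MetricSpace X] (n : ℕ) (r : ℝ) (𝒰 : Fin (n+1) → Set (Set X)) : Prop :=
  (∀ x : X, ∃ i, ∃ U ∈ 𝒰 i, x ∈ U) ∧ ∀ i, SepFamily r (𝒰 i)

/-- A collection of subsets of `X` has growth uniformly controlled by the family `F`. -/
def FGrowing {X : Type*} [MetricSpace X] (F : Set (ℝ → ℝ)) (𝒰 : Set (Set X)) : Prop :=
  ∃ f ∈ F, ∃ C : ℝ, 1 ≤ C ∧ ∀ U ∈ 𝒰, ∀ (x : X) (r : ℝ), 0 ≤ r →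
    ∀ s : Finset X, ↑s ⊆ U ∩ Metric.closedBall x r → (s.card : ℝ) ≤ C * f (C * r) + C

/-- `asdim_F X ≤ n`. -/
def AsdimLE (F : Set (ℝ → ℝ)) (X : Type*) [MetricSpace X] (n : ℕ) : Prop :=
  ∀ r : ℝ, 0 < r → ∃ 𝒰 : Fin (n+1) → Set (Set X),
    Decomp n r 𝒰 ∧ FGrowing F (⋃ i, 𝒰 i)

/-- Iterated neighbourhoods `N^m_s(Y)` of `Y` with respect to the collection `𝒴`. -/
def iterNbhd {X : Type*} [MetricSpace X] (𝒴 : Set (Set X)) (s : ℝ) : ℕ → Set X → Set X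
  | 0, Y => Y
  | m + 1, Y => ⋃₀ {Y' | Y' ∈ 𝒴 ∧ ∃ x ∈ Y', ∃ z ∈ iterNbhd 𝒴 s m Y, dist x z ≤ s}

/-- `ov-asdim_F X ≤ n`. -/
def OvAsdimLE (F : Set (ℝ → ℝ)) (X : Type*) [MetricSpace X] (n : ℕ) : Prop :=
  ∀ r : ℝ, 0 < r → ∃ 𝒰 : Fin (n+1) → Set (Set X),
    Decomp n r 𝒰 ∧ ∀ s : ℝ, 1 ≤ s → ∀ m : ℕ,
      FGrowing F ((iterNbhd (⋃ i, 𝒰 i) s m) '' (⋃ i, 𝒰 i))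

/-- A family of non-decreasing functions `[0,∞) → [0,∞)`. -/
def NondecrFamily (F : Set (ℝ → ℝ)) : Prop :=
  ∀ f ∈ F, MonotoneOn f (Set.Ici 0) ∧ ∀ r : ℝ, 0 ≤ r → 0 ≤ f r

/-- The family of non-decreasing subexponential functions. -/
def seFamily : Set (ℝ → ℝ) := {g | SubexpFun g}

/-- The family of non-decreasing functions bounded by `C·r^d + C`. -/
def polyFamily (d : ℕ) : Set (ℝ → ℝ) :=
  {f | MonotoneOn f (Set.Ici 0) ∧ (∀ r : ℝ, 0 ≤ f r) ∧
    ∃ C : ℝ, 0 < C ∧ ∀ r : ℝ, 0 ≤ r → f r ≤ C * r ^ d + C}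

/-- `asdim X ≤ n` : classical asymptotic dimension. -/
def ClassicalAsdimLE (X : Type*) [MetricSpace X] (n : ℕ) : Prop :=
  ∀ r : ℝ, 0 < r → ∃ 𝒰 : Fin (n+1) → Set (Set X), Decomp n r 𝒰 ∧
    ∃ B : ℝ, ∀ U ∈ ⋃ i, 𝒰 i, ∀ x ∈ U, ∀ y ∈ U, dist x y ≤ B

section IterNbhdHelpers

variable {X : Type*} [MetricSpace X] (𝒴 : Set (Set X)) (s : ℝ)

lemma iterNbhd_mono_set : ∀ (m : ℕ) {Y Z : Set X}, Y ⊆ Z →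
    iterNbhd 𝒴 s m Y ⊆ iterNbhd 𝒴 s m Z
  | 0, _, _, h => h
  | m+1, Y, Z, h => by
    rintro p ⟨W, ⟨hW, x, hx, z, hz, hd⟩, hpW⟩
    exact ⟨W, ⟨hW, x, hx, z, iterNbhd_mono_set m h hz, hd⟩, hpW⟩

lemma iterNbhd_mono_s {t : ℝ} (hst : s ≤ t) : ∀ (m : ℕ) (Y : Set X),
    iterNbhd 𝒴 s m Y ⊆ iterNbhd 𝒴 t m Y
  | 0, _ => le_refl _
  | m+1, Y => by
    rintro p ⟨W, ⟨hW, x, hx, z, hz, hd⟩, hpW⟩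
    exact ⟨W, ⟨hW, x, hx, z, iterNbhd_mono_s hst m Y hz, hd.trans hst⟩, hpW⟩

lemma iterNbhd_add (a b : ℕ) (Y : Set X) :
    iterNbhd 𝒴 s (a + b) Y = iterNbhd 𝒴 s a (iterNbhd 𝒴 s b Y) := by
  induction a with
  | zero => rw [Nat.zero_add]; rfl
  | succ a ih =>
    rw [show a + 1 + b = (a + b) + 1 from by omega]
    simp only [iterNbhd, ih]

variable (hc : ∀ x : X, ∃ U ∈ 𝒴, x ∈ U) (hs : 0 ≤ s)
include hc hs

lemma iterNbhd_subset_one (Y : Set X) : Y ⊆ iterNbhd 𝒴 s 1 Y := by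
  intro y hy
  obtain ⟨W, hW, hyW⟩ := hc y
  exact ⟨W, ⟨hW, y, hyW, y, hy, by simp [hs]⟩, hyW⟩

lemma iterNbhd_self_subset (d : ℕ) (Y : Set X) : Y ⊆ iterNbhd 𝒴 s d Y := by
  induction d with
  | zero => exact le_refl _
  | succ d ih =>
    exact ih.trans (iterNbhd_subset_one 𝒴 s hc hs (iterNbhd 𝒴 s d Y))

lemma iterNbhd_mono_m {k k' : ℕ} (hk : k ≤ k') (Y : Set X) :
    iterNbhd 𝒴 s k Y ⊆ iterNbhd 𝒴 s k' Y := by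
  obtain ⟨d, rfl⟩ := Nat.exists_eq_add_of_le hk
  rw [iterNbhd_add]
  exact iterNbhd_mono_set 𝒴 s k (iterNbhd_self_subset 𝒴 s hc hs d Y)

lemma iterNbhd_rev : ∀ (a : ℕ) (U' : Set X), U' ∈ 𝒴 → ∀ x ∈ iterNbhd 𝒴 s a U',
    U' ⊆ iterNbhd 𝒴 s (2*a+1) {x}
  | 0, U', hU', x, hx => by
    intro y hy
    exact ⟨U', ⟨hU', x, hx, x, rfl, by simp [hs]⟩, hy⟩
  | a+1, U', hU', x, hx => by
    obtain ⟨W, ⟨hW, w, hwW, z, hz, hd⟩, hxW⟩ := hx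
    have IH := iterNbhd_rev a U' hU' z hz
    have hw1 : w ∈ iterNbhd 𝒴 s 1 {x} :=
      ⟨W, ⟨hW, x, hxW, x, rfl, by simp [hs]⟩, hwW⟩
    obtain ⟨Wz, hWz, hzWz⟩ := hc z
    have hz2 : z ∈ iterNbhd 𝒴 s 2 {x} := by
      refine ⟨Wz, ⟨hWz, z, hzWz, w, ?_, by rw [dist_comm]; exact hd⟩, hzWz⟩
      exact iterNbhd_mono_m 𝒴 s hc hs (by norm_num) _ hw1
    have hsub : iterNbhd 𝒴 s (2*a+1) {z} ⊆ iterNbhd 𝒴 s (2*(a+1)+1) {x} := by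
      have h1 : iterNbhd 𝒴 s (2*a+1) {z} ⊆
          iterNbhd 𝒴 s (2*a+1) (iterNbhd 𝒴 s 2 {x}) :=
        iterNbhd_mono_set 𝒴 s _ (singleton_subset_iff.2 hz2)
      rw [← iterNbhd_add] at h1
      exact h1.trans (iterNbhd_mono_m 𝒴 s hc hs (by omega) _)
    exact IH.trans hsub

end IterNbhdHelpers

/-- If every member of a cover `𝒱` is contained in `N^D_D(U)` for some
member `U` of a cover `𝒰`, then iterated neighbourhoods with respect to `𝒱` are contained in
iterated neighbourhoods with respect to `𝒰` in a controlled way. -/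
theorem iterNbhd_change_of_cover
    (X : Type*) [MetricSpace X] (𝒰 𝒱 : Set (Set X))
    (h𝒰 : ∀ x : X, ∃ U ∈ 𝒰, x ∈ U) (h𝒱 : ∀ x : X, ∃ V ∈ 𝒱, x ∈ V)
    (D : ℕ) (hD : 1 ≤ D)
    (hVU : ∀ V ∈ 𝒱, ∃ U ∈ 𝒰, V ⊆ iterNbhd 𝒰 (D : ℝ) D U) :
    ∀ (m : ℕ) (s : ℝ), 1 ≤ s → ∃ (m' : ℕ) (s' : ℝ), 1 ≤ s' ∧
      ∀ V ∈ 𝒱, ∀ U ∈ 𝒰, V ⊆ iterNbhd 𝒰 (D : ℝ) D U →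
        iterNbhd 𝒱 s m V ⊆ iterNbhd 𝒰 s' m' U := by
  intro m s hs
  set s' : ℝ := max s (D : ℝ) with hs'def
  have hs'1 : (1 : ℝ) ≤ s' := le_trans hs (le_max_left _ _)
  have hs'0 : (0 : ℝ) ≤ s' := by linarith
  have hDs' : (D : ℝ) ≤ s' := le_max_right _ _
  have hss' : s ≤ s' := le_max_left _ _
  refine ⟨D + m * (3 * D + 2), s', hs'1, ?_⟩
  induction m with
  | zero =>
    intro V hV U hU hVU'
    show V ⊆ _
    simpa using hVU'.trans (iterNbhd_mono_s 𝒰 (D : ℝ) hDs' D U)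
  | succ m ih =>
    intro V hV U hU hVU'
    rintro p ⟨V', ⟨hV'𝒱, w, hwV', z, hz, hdwz⟩, hpV'⟩
    -- z is in the m-stage 𝒰-neighbourhood of U
    have hzU : z ∈ iterNbhd 𝒰 s' (D + m * (3*D+2)) U := ih V hV U hU hVU' hz
    -- w is within s' of z, so w ∈ N^1_{s'}({z}) wrt 𝒰
    obtain ⟨W, hW𝒰, hwW⟩ := h𝒰 w
    have hw1 : w ∈ iterNbhd 𝒰 s' (D + m * (3*D+2) + 1) U := by
      rw [add_comm _ 1, iterNbhd_add]
      exact ⟨W, ⟨hW𝒰, w, hwW, z, hzU, hdwz.trans hss'⟩, hwW⟩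
    -- V' ⊆ N^D_D(U') for some U' ∈ 𝒰
    obtain ⟨U', hU'𝒰, hV'U'⟩ := hVU V' hV'𝒱
    have hV'U's' : V' ⊆ iterNbhd 𝒰 s' D U' := hV'U'.trans (iterNbhd_mono_s 𝒰 _ hDs' D U')
    have hwU' : w ∈ iterNbhd 𝒰 s' D U' := hV'U's' hwV'
    -- reverse: U' ⊆ N^{2D+1}_{s'}({w})
    have hrev : U' ⊆ iterNbhd 𝒰 s' (2*D+1) {w} :=
      iterNbhd_rev 𝒰 s' h𝒰 hs'0 D U' hU'𝒰 w hwU'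
    -- hence V' ⊆ N^{D}(U') ⊆ N^{3D+1}({w})
    have hV'w : V' ⊆ iterNbhd 𝒰 s' (D + (2*D+1)) {w} := by
      rw [iterNbhd_add]
      exact hV'U's'.trans (iterNbhd_mono_set 𝒰 s' D hrev)
    -- and {w} ⊆ N^{k_m+1}(U)
    have hfinal : V' ⊆ iterNbhd 𝒰 s' (D + (m+1) * (3*D+2)) U := by
      have h1 : V' ⊆ iterNbhd 𝒰 s' ((D + (2*D+1)) + (D + m * (3*D+2) + 1)) U := by
        rw [iterNbhd_add]
        exact hV'w.trans (iterNbhd_mono_set 𝒰 s' _ (singleton_subset_iff.2 hw1))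
      refine h1.trans (iterNbhd_mono_m 𝒰 s' h𝒰 hs'0 (by ring_nf; omega) U)
    exact hfinal hpV'
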